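/- Let I be a finite index set with a distinguished element 0. Let S be a unitary, symmetric complex matrix indexed by I whose 0-column entries S_{λ,0} are real and strictly positive, and let T be a diagonal unitary matrix with T_{λ,λ} = t·exp(2πi h_λ), where |t| = 1, h_λ ∈ ℝ and h_0 = 0. Assume the modular relation (ST)^3 = S^2. Define d_ρ := S_{ρ,0}/S_{0,0} and N_{λ,μ}^ρ := Σ_{σ∈I} S_{λ,σ} S_{μ,σ} conj(S_{ρ,σ}) / S_{0,σ}. Then for all λ, μ ∈ I: S_{λ,μ} = S_{0,0} · Σ_{ρ∈I} exp(2πi(h_λ + h_μ − h_ρ)) · N_{λ,μ}^ρ · d_ρ. -/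

import Mathlib

open scoped ComplexConjugate Real

/-- If `S` is unitary and symmetric with real strictly positive `i0`-column,
`T = diagonal (t · exp(2πi h λ))` with `|t| = 1` and `h i0 = 0`, and `(ST)^3 = S^2`, then
`S λ μ = S i0 i0 · Σ_ρ exp(2πi(h λ + h μ − h ρ)) · N λ μ ρ · d ρ` with the Verlinde
numbers `N` and quantum dimensions `d`. -/
theorem S_matrix_formula_from_modular_relation
    {I : Type*} [Fintype I] [DecidableEq I] (i0 : I)
    (S T : Matrix I I ℂ) (hS : S ∈ Matrix.unitaryGroup I ℂ)
    (hsymm : S.transpose = S)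
    (hreal : ∀ lam : I, (S lam i0).im = 0)
    (hpos : ∀ lam : I, 0 < (S lam i0).re)
    (t : ℂ) (ht : ‖t‖ = 1)
    (h : I → ℝ) (h0 : h i0 = 0)
    (hT : T = Matrix.diagonal (fun lam : I =>
      t * Complex.exp (2 * (π : ℂ) * Complex.I * (h lam : ℂ))))
    (hmod : (S * T) ^ 3 = S ^ 2)
    (d : I → ℂ) (hd : ∀ rho : I, d rho = S rho i0 / S i0 i0)
    (N : I → I → I → ℂ)
    (hN : ∀ lam mu rho : I,
      N lam mu rho = ∑ sigma : I, S lam sigma * S mu sigma * conj (S rho sigma) / S i0 sigma) :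
    ∀ lam mu : I, S lam mu = S i0 i0 *
      ∑ rho : I, Complex.exp (2 * (π : ℂ) * Complex.I * ((h lam : ℂ) + (h mu : ℂ) - (h rho : ℂ))) *
        N lam mu rho * d rho := by
  intro lam mu
  set e : I → ℂ := fun i => Complex.exp (2 * (π : ℂ) * Complex.I * (h i : ℂ)) with he
  -- basic scalar facts
  have ht0 : t ≠ 0 := by
    intro h'; rw [h'] at ht; simp at ht
  have htc : conj t = t⁻¹ := by
    have h1 : t * conj t = 1 := by
      rw [Complex.mul_conj]
      norm_cast
      rw [Complex.normSq_eq_norm_sq, ht]; norm_num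
    field_simp
    linear_combination h1
  have he0 : e i0 = 1 := by
    rw [he]; simp [h0]
  have hen : ∀ i, e i ≠ 0 := fun i => Complex.exp_ne_zero _
  have hec : ∀ i, conj (e i) = (e i)⁻¹ := by
    intro i
    rw [he]
    simp only
    rw [← Complex.exp_conj, ← Complex.exp_neg]
    congr 1
    have h2 : ((2:ℂ) * (π:ℂ) * Complex.I * (h i : ℂ))
        = ((2 * π * h i : ℝ) : ℂ) * Complex.I := by push_cast; ring
    rw [h2, map_mul, Complex.conj_ofReal, Complex.conj_I]
    ring
  -- symmetry / reality facts
  have hsym' : ∀ a b, S a b = S b a := fun a b =>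
    (congrFun (congrFun hsymm a) b).symm
  have hcr : ∀ i, conj (S i i0) = S i i0 := fun i =>
    Complex.conj_eq_iff_im.mpr (hreal i)
  have hScol : ∀ i, S i i0 ≠ 0 := by
    intro i h'
    have := hpos i
    rw [h'] at this; simp at this
  have hSrow : ∀ i, S i0 i ≠ 0 := fun i => by
    rw [hsym']; exact hScol i
  have hS00 : S i0 i0 ≠ 0 := hScol i0
  have hTd : T = Matrix.diagonal (fun i => t * e i) := hT
  -- matrix identity T * (S*T*S) * T = S
  have h1 : star S * S = 1 := hS.1
  have hmod' : S * (T * (S * (T * (S * T)))) = S * S := by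
    have := hmod
    rw [pow_succ, pow_succ, pow_one, pow_two] at this
    simpa [mul_assoc] using this
  have hTmat : T * (S * T * S) * T = S := by
    have key : T * (S * (T * (S * T))) = S := by
      calc T * (S * (T * (S * T)))
          = (star S * S) * (T * (S * (T * (S * T)))) := by rw [h1, one_mul]
        _ = star S * (S * (T * (S * (T * (S * T))))) := by rw [mul_assoc]
        _ = star S * (S * S) := by rw [hmod']
        _ = (star S * S) * S := by rw [← mul_assoc]
        _ = S := by rw [h1, one_mul]
    simp only [mul_assoc]
    exact key
  -- entrywise version
  have hA : ∀ a b, (t * e a) * ((S * T * S) a b) * (t * e b) = S a b := by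
    intro a b
    have h3 := congrFun (congrFun hTmat a) b
    calc (t * e a) * ((S * T * S) a b) * (t * e b)
        = (T * (S * T * S) * T) a b := by
          rw [hTd, Matrix.mul_diagonal, Matrix.diagonal_mul]
      _ = S a b := h3
  -- key sum identity
  have hC : ∀ a b, t * t * t * e a * e b * (∑ σ, S a σ * e σ * S σ b) = S a b := by
    intro a b
    have h4 := hA a b
    have h5 : (S * T * S) a b = t * ∑ σ, S a σ * e σ * S σ b := by
      rw [Matrix.mul_apply]
      rw [Finset.mul_sum]
      refine Finset.sum_congr rfl fun σ _ => ?_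
      rw [hTd, Matrix.mul_diagonal]
      ring
    rw [h5] at h4
    linear_combination h4
  -- the inner rho-sum identity
  have hB : ∀ σ, ∑ ρ, S ρ i0 * (e ρ)⁻¹ * conj (S ρ σ)
      = t * t * t * e σ * S i0 σ := by
    intro σ
    have h6 := congrArg (starRingEnd ℂ) (hC i0 σ)
    simp only [map_mul, map_sum, map_inv₀, htc, hec, he0, inv_one, map_one] at h6
    have h7 : ∑ ρ, conj (S i0 ρ) * (e ρ)⁻¹ * conj (S ρ σ)
        = ∑ ρ, S ρ i0 * (e ρ)⁻¹ * conj (S ρ σ) :=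
      Finset.sum_congr rfl fun ρ _ => by rw [hsym' i0 ρ, hcr ρ]
    rw [h7] at h6
    have h8 : conj (S i0 σ) = S i0 σ := by
      rw [hsym' i0 σ, hcr σ, ← hsym' i0 σ]
    rw [h8] at h6
    obtain ⟨K, hK⟩ : ∃ K, ∑ ρ, S ρ i0 * (e ρ)⁻¹ * conj (S ρ σ) = K := ⟨_, rfl⟩
    rw [hK] at h6 ⊢
    field_simp [ht0, hen σ] at h6
    linear_combination h6
  -- the main computation
  have hexp : ∀ ρ, Complex.exp (2 * (π : ℂ) * Complex.I * ((h lam : ℂ) + (h mu : ℂ) - (h ρ : ℂ)))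
      = e lam * e mu / e ρ := by
    intro ρ
    rw [show (2 * (π : ℂ) * Complex.I) * ((h lam : ℂ) + (h mu : ℂ) - (h ρ : ℂ))
        = (2 * (π : ℂ) * Complex.I * (h lam : ℂ) + 2 * (π : ℂ) * Complex.I * (h mu : ℂ))
          - 2 * (π : ℂ) * Complex.I * (h ρ : ℂ) by ring,
      Complex.exp_sub, Complex.exp_add]
  simp only [hexp, hN, hd]
  have hswap : ∑ ρ, (e lam * e mu / e ρ) *
        (∑ σ, S lam σ * S mu σ * conj (S ρ σ) / S i0 σ) * (S ρ i0 / S i0 i0)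
      = ∑ σ, ∑ ρ, (e lam * e mu * S lam σ * S mu σ / (S i0 σ * S i0 i0)) *
        (S ρ i0 * (e ρ)⁻¹ * conj (S ρ σ)) := by
    rw [Finset.sum_comm]
    refine Finset.sum_congr rfl fun ρ _ => ?_
    rw [Finset.mul_sum, Finset.sum_mul]
    exact Finset.sum_congr rfl fun σ _ => by ring
  rw [hswap]
  have hinner : ∀ σ, ∑ ρ, (e lam * e mu * S lam σ * S mu σ / (S i0 σ * S i0 i0)) *
        (S ρ i0 * (e ρ)⁻¹ * conj (S ρ σ))
      = (t * t * t * e lam * e mu / S i0 i0) * (S lam σ * e σ * S σ mu) := by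
    intro σ
    rw [← Finset.mul_sum, hB σ]
    rw [hsym' σ mu]
    field_simp [hSrow σ, hS00]
  simp only [hinner]
  rw [← Finset.mul_sum]
  have hK := hC lam mu
  field_simp
  linear_combination -hK
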